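/- arXiv:2101.05942 — 2 statements merged into one kernel-verified Lean document; each statement's English description precedes it below -/
import Mathlib

section
/- As |z| → ∞ with |arg z| ≤ c < π, T(z) = 1 + (i/z)·[2 ∑_{k∈Δ} Im(z_k) − ∫_{z₀}^{z₁} ν(s) ds] + O(z^{−2}). -/
open Complex MeasureTheory Filter Asymptotics Bornology Topology

private lemma aux_ev_norm (R : ℝ) : ∀ᶠ z : ℂ in cobounded ℂ, R ≤ ‖z‖ :=
  tendsto_norm_cobounded_atTop.eventually_ge_atTop R

private lemma aux_inv_isBigO (a : ℂ) :
    (fun z : ℂ => (z - a)⁻¹) =O[cobounded ℂ] (fun z : ℂ => z⁻¹) := by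
  apply IsBigO.of_bound 2
  filter_upwards [aux_ev_norm (2 * ‖a‖ + 2)] with z hz
  have ha : 0 ≤ ‖a‖ := norm_nonneg a
  have h1 : ‖z‖ - ‖a‖ ≤ ‖z - a‖ := norm_sub_norm_le z a
  have h2 : ‖z‖ / 2 ≤ ‖z - a‖ := by linarith
  have hzpos : (0 : ℝ) < ‖z‖ := by linarith
  have h3 : (0 : ℝ) < ‖z - a‖ := by linarith
  rw [norm_inv, norm_inv]
  calc ‖z - a‖⁻¹ ≤ (‖z‖ / 2)⁻¹ := by
        apply inv_anti₀ (by linarith) (by linarith)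
    _ = 2 * ‖z‖⁻¹ := by rw [inv_div]; ring

private lemma aux_shift (a b : ℂ) :
    (fun z : ℂ => b / (z - a) - b / z) =O[cobounded ℂ] (fun z : ℂ => z⁻¹ ^ 2) := by
  have h : (fun z : ℂ => b * a * ((z - a)⁻¹ * z⁻¹)) =O[cobounded ℂ]
      (fun z : ℂ => z⁻¹ ^ 2) := by
    have := ((aux_inv_isBigO a).mul (isBigO_refl (fun z : ℂ => z⁻¹) _)).const_mul_left (b * a)
    simpa [pow_two] using this
  refine h.congr' ?_ EventuallyEq.rfl
  filter_upwards [aux_ev_norm (‖a‖ + 1)] with z hz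
  have ha : 0 ≤ ‖a‖ := norm_nonneg a
  have hz0 : z ≠ 0 := by
    intro h0; rw [h0, norm_zero] at hz; linarith
  have hza : z - a ≠ 0 := by
    intro h0
    have : ‖z‖ = ‖a‖ := by rw [show z = a from by linear_combination h0]
    linarith
  field_simp
  ring

private lemma aux_prod {ι : Type*} (s : Finset ι) (f : ι → ℂ → ℂ) (L : Filter ℂ)
    (hb : (fun z : ℂ => z⁻¹) =O[L] (fun _ : ℂ => (1 : ℂ)))
    (h1 : ∀ k ∈ s, (fun z => f k z - 1) =O[L] fun z : ℂ => z⁻¹) :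
    (fun z => (∏ k ∈ s, f k z) - 1 - ∑ k ∈ s, (f k z - 1)) =O[L]
      fun z : ℂ => z⁻¹ ^ 2 := by
  classical
  induction s using Finset.induction_on with
  | empty =>
    simp only [Finset.prod_empty, Finset.sum_empty, sub_self, sub_zero]
    exact isBigO_zero _ _
  | @insert a s ha ih =>
    have hfa1 : (fun z => f a z - 1) =O[L] fun z : ℂ => z⁻¹ :=
      h1 a (Finset.mem_insert_self a s)
    have hfa : (fun z => f a z) =O[L] fun _ : ℂ => (1 : ℂ) := by
      have h2 := (hfa1.trans hb).add (isBigO_refl (fun _ : ℂ => (1 : ℂ)) L)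
      have h3 : (fun z : ℂ => (f a z - 1) + 1) = fun z => f a z := by funext z; ring
      rw [h3] at h2
      simpa using h2
    have hS : (fun z => ∑ k ∈ s, (f k z - 1)) =O[L] fun z : ℂ => z⁻¹ :=
      IsBigO.fun_sum fun k hk => h1 k (Finset.mem_insert_of_mem hk)
    have hP := ih fun k hk => h1 k (Finset.mem_insert_of_mem hk)
    have hA : (fun z => f a z * ((∏ k ∈ s, f k z) - 1 - ∑ k ∈ s, (f k z - 1)))
        =O[L] fun z : ℂ => z⁻¹ ^ 2 := by simpa using hfa.mul hP
    have hB : (fun z => (f a z - 1) * ∑ k ∈ s, (f k z - 1)) =O[L]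
        fun z : ℂ => z⁻¹ ^ 2 := by
      simpa [pow_two] using hfa1.mul hS
    refine (hA.add hB).congr (fun z => ?_) (fun z => rfl)
    rw [Finset.prod_insert ha, Finset.sum_insert ha]
    ring

theorem T_asymptotic_expansion
    (z₀ z₁ : ℝ) (hz : z₀ < z₁) (n : ℕ) (zk : Fin n → ℂ)
    (hup : ∀ k, 0 < (zk k).im)
    (ν : ℝ → ℝ) (hν : IntegrableOn ν (Set.Icc z₀ z₁))
    (c : ℝ) (hc : c < Real.pi) :
    (fun z : ℂ =>
        (∏ k, (z - (starRingEnd ℂ) (zk k)) / (z - zk k)) *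
            Complex.exp (Complex.I *
              ∫ s in z₀..z₁, (ν s : ℂ) / ((s : ℂ) - z)) -
          1 -
          (Complex.I / z) *
            ((2 * ∑ k, (zk k).im - ∫ s in z₀..z₁, ν s : ℝ) : ℂ))
      =O[Bornology.cobounded ℂ ⊓ Filter.principal {z : ℂ | |Complex.arg z| ≤ c}]
      (fun z : ℂ => z⁻¹ ^ 2) := by
  -- it suffices to prove the estimate along the cobounded filter
  have main : (fun z : ℂ =>
        (∏ k, (z - (starRingEnd ℂ) (zk k)) / (z - zk k)) *
            Complex.exp (Complex.I *
              ∫ s in z₀..z₁, (ν s : ℂ) / ((s : ℂ) - z)) -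
          1 -
          (Complex.I / z) *
            ((2 * ∑ k, (zk k).im - ∫ s in z₀..z₁, ν s : ℝ) : ℂ))
      =O[cobounded ℂ] (fun z : ℂ => z⁻¹ ^ 2) := by
    set M : ℝ := max |z₀| |z₁| with hMdef
    have hM : 0 ≤ M := le_trans (abs_nonneg z₀) (le_max_left _ _)
    have habs : ∀ s ∈ Set.Icc z₀ z₁, |s| ≤ M := by
      intro s hs
      rw [abs_le]
      constructor
      · calc -M ≤ -|z₀| := by simp [hMdef, le_max_left]
          _ ≤ z₀ := neg_abs_le z₀
          _ ≤ s := hs.1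
      · calc s ≤ z₁ := hs.2
          _ ≤ |z₁| := le_abs_self z₁
          _ ≤ M := le_max_right _ _
    have hlow : ∀ z : ℂ, 2 * M + 2 ≤ ‖z‖ → ∀ s ∈ Set.Icc z₀ z₁,
        ‖z‖ / 2 ≤ ‖(s : ℂ) - z‖ := by
      intro z hzn s hs
      have h1 : ‖(s : ℂ)‖ ≤ M := by
        rw [Complex.norm_real, Real.norm_eq_abs]; exact habs s hs
      have h2 : ‖z‖ - ‖(s : ℂ)‖ ≤ ‖z - (s : ℂ)‖ := norm_sub_norm_le _ _
      rw [norm_sub_rev] at h2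
      linarith
    have hne : ∀ z : ℂ, 2 * M + 2 ≤ ‖z‖ → ∀ s ∈ Set.Icc z₀ z₁,
        (s : ℂ) - z ≠ 0 := by
      intro z hzn s hs
      have := hlow z hzn s hs
      intro h0
      rw [h0, norm_zero] at this
      linarith
    -- integrability of the two integrands
    have hint1 : ∀ z : ℂ, 2 * M + 2 ≤ ‖z‖ →
        IntervalIntegrable (fun s : ℝ => (ν s : ℂ) / ((s : ℂ) - z)) volume z₀ z₁ := by
      intro z hzn
      rw [intervalIntegrable_iff_integrableOn_Icc_of_le hz.le]
      have base : IntegrableOn (fun s : ℝ => ((ν s : ℂ))) (Set.Icc z₀ z₁) := hν.ofReal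
      have hmeas : AEStronglyMeasurable (fun s : ℝ => ((s : ℂ) - z)⁻¹)
          (volume.restrict (Set.Icc z₀ z₁)) :=
        ((Complex.measurable_ofReal.sub measurable_const).inv).aestronglyMeasurable
      have hbd : ∀ᵐ (s : ℝ) ∂(volume.restrict (Set.Icc z₀ z₁)), ‖((s : ℂ) - z)⁻¹‖ ≤ 1 := by
        filter_upwards [ae_restrict_mem measurableSet_Icc] with s hs
        have h1 := hlow z hzn s hs
        rw [norm_inv]
        exact inv_le_one_of_one_le₀ (by linarith)
      have h := base.bdd_mul hmeas hbd
      have heq : (fun s : ℝ => (ν s : ℂ) / ((s : ℂ) - z)) =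
          fun s : ℝ => ((s : ℂ) - z)⁻¹ * (ν s : ℂ) := by
        funext s; rw [div_eq_mul_inv, mul_comm]
      rw [heq]; exact h
    have hint2 : ∀ z : ℂ, 2 * M + 2 ≤ ‖z‖ →
        IntervalIntegrable (fun s : ℝ => (ν s : ℂ) * (s : ℂ) / ((s : ℂ) - z))
          volume z₀ z₁ := by
      intro z hzn
      rw [intervalIntegrable_iff_integrableOn_Icc_of_le hz.le]
      have base : IntegrableOn (fun s : ℝ => ((ν s : ℂ))) (Set.Icc z₀ z₁) := hν.ofReal
      have hmeas : AEStronglyMeasurable (fun s : ℝ => (s : ℂ) / ((s : ℂ) - z))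
          (volume.restrict (Set.Icc z₀ z₁)) :=
        (Complex.measurable_ofReal.div
          (Complex.measurable_ofReal.sub measurable_const)).aestronglyMeasurable
      have hbd : ∀ᵐ (s : ℝ) ∂(volume.restrict (Set.Icc z₀ z₁)),
          ‖(s : ℂ) / ((s : ℂ) - z)‖ ≤ 1 := by
        filter_upwards [ae_restrict_mem measurableSet_Icc] with s hs
        have h1 := hlow z hzn s hs
        have h2 : ‖(s : ℂ)‖ ≤ M := by
          rw [Complex.norm_real, Real.norm_eq_abs]; exact habs s hs
        rw [norm_div]
        apply div_le_one_of_le₀ (by linarith) (norm_nonneg _)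
      have h := base.bdd_mul hmeas hbd
      have heq : (fun s : ℝ => (ν s : ℂ) * (s : ℂ) / ((s : ℂ) - z)) =
          fun s : ℝ => ((s : ℂ) / ((s : ℂ) - z)) * (ν s : ℂ) := by
        funext s; rw [div_eq_mul_inv, mul_comm, div_eq_mul_inv]; ring
      rw [heq]; exact h
    have hνI : IntervalIntegrable (fun s => |ν s|) volume z₀ z₁ := by
      rw [intervalIntegrable_iff_integrableOn_Icc_of_le hz.le]
      have h := hν.norm; simp only [Real.norm_eq_abs] at h; exact h
    set K : ℝ := ∫ s in z₀..z₁, |ν s| with hKdef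
    -- bound for the main integral
    have hIb : ∀ z : ℂ, 2 * M + 2 ≤ ‖z‖ →
        ‖∫ s in z₀..z₁, (ν s : ℂ) / ((s : ℂ) - z)‖ ≤ 2 * K * ‖z‖⁻¹ := by
      intro z hzn
      have hzpos : (0 : ℝ) < ‖z‖ := by linarith
      have key : ∀ s ∈ Set.Icc z₀ z₁,
          ‖(ν s : ℂ) / ((s : ℂ) - z)‖ ≤ |ν s| * (2 * ‖z‖⁻¹) := by
        intro s hs
        have h1 := hlow z hzn s hs
        have h2 : ‖(s : ℂ) - z‖⁻¹ ≤ 2 * ‖z‖⁻¹ := by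
          have h3 : ‖(s : ℂ) - z‖⁻¹ ≤ (‖z‖ / 2)⁻¹ :=
            inv_anti₀ (by linarith) h1
          rw [inv_div, div_eq_mul_inv] at h3
          linarith
        rw [norm_div, Complex.norm_real, Real.norm_eq_abs, div_eq_mul_inv]
        exact mul_le_mul_of_nonneg_left h2 (abs_nonneg _)
      calc ‖∫ s in z₀..z₁, (ν s : ℂ) / ((s : ℂ) - z)‖
          ≤ ∫ s in z₀..z₁, ‖(ν s : ℂ) / ((s : ℂ) - z)‖ :=
            intervalIntegral.norm_integral_le_integral_norm hz.le
        _ ≤ ∫ s in z₀..z₁, |ν s| * (2 * ‖z‖⁻¹) :=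
            intervalIntegral.integral_mono_on hz.le (hint1 z hzn).norm
              (hνI.mul_const _) key
        _ = 2 * K * ‖z‖⁻¹ := by rw [intervalIntegral.integral_mul_const]; ring
    -- bound for the auxiliary integral
    have hFb : ∀ z : ℂ, 2 * M + 2 ≤ ‖z‖ →
        ‖∫ s in z₀..z₁, (ν s : ℂ) * (s : ℂ) / ((s : ℂ) - z)‖
          ≤ 2 * (M * K) * ‖z‖⁻¹ := by
      intro z hzn
      have hzpos : (0 : ℝ) < ‖z‖ := by linarith
      have key : ∀ s ∈ Set.Icc z₀ z₁,
          ‖(ν s : ℂ) * (s : ℂ) / ((s : ℂ) - z)‖ ≤ |ν s| * (2 * M * ‖z‖⁻¹) := by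
        intro s hs
        have h1 := hlow z hzn s hs
        have h2 : ‖(s : ℂ) - z‖⁻¹ ≤ 2 * ‖z‖⁻¹ := by
          have h3 : ‖(s : ℂ) - z‖⁻¹ ≤ (‖z‖ / 2)⁻¹ :=
            inv_anti₀ (by linarith) h1
          rw [inv_div, div_eq_mul_inv] at h3
          linarith
        have h4 : |s| ≤ M := habs s hs
        have h5 : (0 : ℝ) ≤ ‖(s : ℂ) - z‖⁻¹ := inv_nonneg.2 (norm_nonneg _)
        have h6 : (0 : ℝ) ≤ ‖z‖⁻¹ := inv_nonneg.2 (norm_nonneg _)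
        rw [norm_div, norm_mul, Complex.norm_real, Complex.norm_real,
          Real.norm_eq_abs, Real.norm_eq_abs, div_eq_mul_inv, mul_assoc]
        apply mul_le_mul_of_nonneg_left _ (abs_nonneg _)
        nlinarith
      calc ‖∫ s in z₀..z₁, (ν s : ℂ) * (s : ℂ) / ((s : ℂ) - z)‖
          ≤ ∫ s in z₀..z₁, ‖(ν s : ℂ) * (s : ℂ) / ((s : ℂ) - z)‖ :=
            intervalIntegral.norm_integral_le_integral_norm hz.le
        _ ≤ ∫ s in z₀..z₁, |ν s| * (2 * M * ‖z‖⁻¹) :=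
            intervalIntegral.integral_mono_on hz.le (hint2 z hzn).norm
              (hνI.mul_const _) key
        _ = 2 * (M * K) * ‖z‖⁻¹ := by
            rw [intervalIntegral.integral_mul_const]; ring
    -- the big-O statements for the integrals
    have hI : (fun z : ℂ => ∫ s in z₀..z₁, (ν s : ℂ) / ((s : ℂ) - z))
        =O[cobounded ℂ] (fun z : ℂ => z⁻¹) := by
      apply IsBigO.of_bound (2 * K)
      filter_upwards [aux_ev_norm (2 * M + 2)] with z hzn
      rw [norm_inv]
      exact hIb z hzn
    have hF : (fun z : ℂ => ∫ s in z₀..z₁, (ν s : ℂ) * (s : ℂ) / ((s : ℂ) - z))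
        =O[cobounded ℂ] (fun z : ℂ => z⁻¹) := by
      apply IsBigO.of_bound (2 * (M * K))
      filter_upwards [aux_ev_norm (2 * M + 2)] with z hzn
      rw [norm_inv]
      exact hFb z hzn
    -- eventual identity relating the two integrals
    have hiden : (fun z : ℂ =>
        (∫ s in z₀..z₁, (ν s : ℂ) / ((s : ℂ) - z)) +
          ((∫ s in z₀..z₁, ν s : ℝ) : ℂ) / z) =ᶠ[cobounded ℂ]
        (fun z : ℂ => z⁻¹ * ∫ s in z₀..z₁, (ν s : ℂ) * (s : ℂ) / ((s : ℂ) - z)) := by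
      filter_upwards [aux_ev_norm (2 * M + 2)] with z hzn
      have hz0 : z ≠ 0 := by
        intro h0; rw [h0, norm_zero] at hzn; linarith
      have e1 : (∫ s in z₀..z₁, (ν s : ℂ) * (s : ℂ) / ((s : ℂ) - z)) -
          z * ∫ s in z₀..z₁, (ν s : ℂ) / ((s : ℂ) - z) =
          ((∫ s in z₀..z₁, ν s : ℝ) : ℂ) := by
        rw [← intervalIntegral.integral_const_mul,
          ← intervalIntegral.integral_sub (hint2 z hzn) ((hint1 z hzn).const_mul z),
          ← intervalIntegral.integral_ofReal]
        apply intervalIntegral.integral_congr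
        intro s hs
        have hs' : s ∈ Set.Icc z₀ z₁ := by rwa [Set.uIcc_of_le hz.le] at hs
        have hsz : (s : ℂ) - z ≠ 0 := hne z hzn s hs'
        field_simp
      rw [show (∫ s in z₀..z₁, (ν s : ℂ) * (s : ℂ) / ((s : ℂ) - z)) =
          z * (∫ s in z₀..z₁, (ν s : ℂ) / ((s : ℂ) - z)) +
          ((∫ s in z₀..z₁, ν s : ℝ) : ℂ) from by linear_combination e1]
      rw [mul_add, ← mul_assoc, inv_mul_cancel₀ hz0, one_mul, div_eq_inv_mul]
    -- second-order estimate for the integral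
    have h2 : (fun z : ℂ => (∫ s in z₀..z₁, (ν s : ℂ) / ((s : ℂ) - z)) +
        ((∫ s in z₀..z₁, ν s : ℝ) : ℂ) / z) =O[cobounded ℂ]
        (fun z : ℂ => z⁻¹ ^ 2) := by
      have hmain := (isBigO_refl (fun z : ℂ => z⁻¹) (cobounded ℂ)).mul hF
      exact hmain.congr' hiden.symm (Eventually.of_forall fun z => (pow_two _).symm)
    -- the exponential factor
    have hw : (fun z : ℂ => Complex.I * ∫ s in z₀..z₁, (ν s : ℂ) / ((s : ℂ) - z))
        =O[cobounded ℂ] (fun z : ℂ => z⁻¹) := hI.const_mul_left Complex.I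
    have hw0 : Tendsto
        (fun z : ℂ => Complex.I * ∫ s in z₀..z₁, (ν s : ℂ) / ((s : ℂ) - z))
        (cobounded ℂ) (𝓝 0) := hw.trans_tendsto tendsto_inv₀_cobounded
    have hg1 : (fun z : ℂ =>
        Complex.exp (Complex.I * ∫ s in z₀..z₁, (ν s : ℂ) / ((s : ℂ) - z)))
        =O[cobounded ℂ] (fun _ : ℂ => (1 : ℂ)) := by
      have ht : Tendsto (fun z : ℂ =>
          Complex.exp (Complex.I * ∫ s in z₀..z₁, (ν s : ℂ) / ((s : ℂ) - z)))
          (cobounded ℂ) (𝓝 1) := by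
        have := (Complex.continuous_exp.tendsto 0).comp hw0
        simpa [Function.comp_def] using this
      exact ht.isBigO_one ℂ
    have hexp : (fun z : ℂ =>
        Complex.exp (Complex.I * ∫ s in z₀..z₁, (ν s : ℂ) / ((s : ℂ) - z)) - 1 -
          Complex.I * ∫ s in z₀..z₁, (ν s : ℂ) / ((s : ℂ) - z))
        =O[cobounded ℂ] (fun z : ℂ => z⁻¹ ^ 2) := by
      have h1 : (fun z : ℂ =>
          Complex.exp (Complex.I * ∫ s in z₀..z₁, (ν s : ℂ) / ((s : ℂ) - z)) - 1 -
            Complex.I * ∫ s in z₀..z₁, (ν s : ℂ) / ((s : ℂ) - z))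
          =O[cobounded ℂ] (fun z : ℂ =>
            (Complex.I * ∫ s in z₀..z₁, (ν s : ℂ) / ((s : ℂ) - z)) ^ 2) := by
        apply IsBigO.of_bound 1
        filter_upwards [hw0 (Metric.closedBall_mem_nhds (0 : ℂ) one_pos)] with z hz1
        rw [Set.mem_preimage, Metric.mem_closedBall, dist_zero_right] at hz1
        have hb := Complex.norm_exp_sub_one_sub_id_le
          (x := Complex.I * ∫ s in z₀..z₁, (ν s : ℂ) / ((s : ℂ) - z))
          hz1
        rw [one_mul, norm_pow]
        simpa using hb
      exact h1.trans (hw.pow 2)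
    have hgfull : (fun z : ℂ =>
        Complex.exp (Complex.I * ∫ s in z₀..z₁, (ν s : ℂ) / ((s : ℂ) - z)) - 1 -
          (-Complex.I * ((∫ s in z₀..z₁, ν s : ℝ) : ℂ)) / z)
        =O[cobounded ℂ] (fun z : ℂ => z⁻¹ ^ 2) := by
      have h3 := h2.const_mul_left Complex.I
      refine (hexp.add h3).congr (fun z => ?_) (fun z => rfl)
      ring
    -- the product factor
    have hu1 : ∀ k, (fun z : ℂ =>
        (z - (starRingEnd ℂ) (zk k)) / (z - zk k) - 1)
        =O[cobounded ℂ] (fun z : ℂ => z⁻¹) := by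
      intro k
      refine ((aux_inv_isBigO (zk k)).const_mul_left
        (zk k - (starRingEnd ℂ) (zk k))).congr' ?_ EventuallyEq.rfl
      filter_upwards [aux_ev_norm (‖zk k‖ + 1)] with z hzn
      have hzk : z - zk k ≠ 0 := by
        intro h0
        have : z = zk k := by linear_combination h0
        rw [this] at hzn; linarith
      field_simp
      ring
    have hb1 : (fun z : ℂ => z⁻¹) =O[cobounded ℂ] (fun _ : ℂ => (1 : ℂ)) :=
      tendsto_inv₀_cobounded.isBigO_one ℂ
    have hprod : (fun z : ℂ =>
        (∏ k, (z - (starRingEnd ℂ) (zk k)) / (z - zk k)) - 1 -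
          ∑ k, ((z - (starRingEnd ℂ) (zk k)) / (z - zk k) - 1))
        =O[cobounded ℂ] (fun z : ℂ => z⁻¹ ^ 2) :=
      aux_prod Finset.univ
        (fun k z => (z - (starRingEnd ℂ) (zk k)) / (z - zk k))
        (cobounded ℂ) hb1 (fun k _ => hu1 k)
    have hterm : ∀ k : Fin n, (fun z : ℂ =>
        ((z - (starRingEnd ℂ) (zk k)) / (z - zk k) - 1) -
          (zk k - (starRingEnd ℂ) (zk k)) / z)
        =O[cobounded ℂ] (fun z : ℂ => z⁻¹ ^ 2) := by
      intro k
      refine (aux_shift (zk k) (zk k - (starRingEnd ℂ) (zk k))).congr' ?_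
        EventuallyEq.rfl
      filter_upwards [aux_ev_norm (‖zk k‖ + 1)] with z hzn
      have hzk : z - zk k ≠ 0 := by
        intro h0
        have : z = zk k := by linear_combination h0
        rw [this] at hzn; linarith
      have : (zk k - (starRingEnd ℂ) (zk k)) / (z - zk k) =
          (z - (starRingEnd ℂ) (zk k)) / (z - zk k) - 1 := by
        field_simp
        ring
      rw [this]
    have hsum : (fun z : ℂ =>
        (∑ k, ((z - (starRingEnd ℂ) (zk k)) / (z - zk k) - 1)) -
          (∑ k, (zk k - (starRingEnd ℂ) (zk k))) / z)
        =O[cobounded ℂ] (fun z : ℂ => z⁻¹ ^ 2) := by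
      have hs := IsBigO.fun_sum (fun k (_ : k ∈ Finset.univ) => hterm k)
      refine hs.congr (fun z => ?_) (fun z => rfl)
      rw [Finset.sum_sub_distrib, Finset.sum_div]
    have hfO : (fun z : ℂ =>
        (∏ k, (z - (starRingEnd ℂ) (zk k)) / (z - zk k)) - 1 -
          (∑ k, (zk k - (starRingEnd ℂ) (zk k))) / z)
        =O[cobounded ℂ] (fun z : ℂ => z⁻¹ ^ 2) := by
      refine (hprod.add hsum).congr (fun z => ?_) (fun z => rfl)
      ring
    -- boundedness facts
    have hz2O1 : (fun z : ℂ => z⁻¹ ^ 2) =O[cobounded ℂ] (fun _ : ℂ => (1 : ℂ)) := by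
      have := hb1.pow 2
      simpa using this
    have hA1 : (fun z : ℂ => (∑ k, (zk k - (starRingEnd ℂ) (zk k))) / z)
        =O[cobounded ℂ] (fun _ : ℂ => (1 : ℂ)) := by
      have := (hb1.const_mul_left (∑ k, (zk k - (starRingEnd ℂ) (zk k))))
      refine this.congr (fun z => ?_) (fun z => rfl)
      rw [div_eq_mul_inv, mul_comm]
    have hone : (fun _ : ℂ => (1 : ℂ)) =O[cobounded ℂ] (fun _ : ℂ => (1 : ℂ)) :=
      isBigO_refl _ _
    have hAz1 : (fun z : ℂ => 1 + (∑ k, (zk k - (starRingEnd ℂ) (zk k))) / z)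
        =O[cobounded ℂ] (fun _ : ℂ => (1 : ℂ)) := hone.add hA1
    -- the constant identity
    have hAB : (∑ k, (zk k - (starRingEnd ℂ) (zk k))) +
        (-Complex.I * ((∫ s in z₀..z₁, ν s : ℝ) : ℂ)) =
        Complex.I * ((2 * ∑ k, (zk k).im - ∫ s in z₀..z₁, ν s : ℝ) : ℂ) := by
      simp only [Complex.sub_conj]
      push_cast
      rw [← Finset.sum_mul, ← Finset.mul_sum]
      ring
    have hABz : ∀ z : ℂ, Complex.I / z *
        ((2 * ∑ k, (zk k).im - ∫ s in z₀..z₁, ν s : ℝ) : ℂ) =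
        ((∑ k, (zk k - (starRingEnd ℂ) (zk k))) +
          (-Complex.I * ((∫ s in z₀..z₁, ν s : ℝ) : ℂ))) / z := by
      intro z
      rw [hAB]
      ring
    -- final assembly
    have t1 : (fun z : ℂ =>
        ((∏ k, (z - (starRingEnd ℂ) (zk k)) / (z - zk k)) - 1 -
            (∑ k, (zk k - (starRingEnd ℂ) (zk k))) / z) *
          Complex.exp (Complex.I * ∫ s in z₀..z₁, (ν s : ℂ) / ((s : ℂ) - z)))
        =O[cobounded ℂ] (fun z : ℂ => z⁻¹ ^ 2) := by
      have := hfO.mul hg1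
      simpa using this
    have t2 : (fun z : ℂ =>
        (1 + (∑ k, (zk k - (starRingEnd ℂ) (zk k))) / z) *
          (Complex.exp (Complex.I * ∫ s in z₀..z₁, (ν s : ℂ) / ((s : ℂ) - z)) - 1 -
            (-Complex.I * ((∫ s in z₀..z₁, ν s : ℝ) : ℂ)) / z))
        =O[cobounded ℂ] (fun z : ℂ => z⁻¹ ^ 2) := by
      have := hAz1.mul hgfull
      simpa using this
    have t3 : (fun z : ℂ =>
        ((∑ k, (zk k - (starRingEnd ℂ) (zk k))) *
          (-Complex.I * ((∫ s in z₀..z₁, ν s : ℝ) : ℂ))) * z⁻¹ ^ 2)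
        =O[cobounded ℂ] (fun z : ℂ => z⁻¹ ^ 2) :=
      (isBigO_refl _ _).const_mul_left _
    refine ((t1.add t2).add t3).congr (fun z => ?_) (fun z => rfl)
    rw [hABz z]
    ring
  exact main.mono inf_le_left
end

section
/- For conjugate exponents p, q with 2 < q < ∞ and 1/p + 1/q = 1, and for A > 0, there is a constant C such that for all t ≥ 1, ∫₀^∞ e^{−tAv²} v^{1/p − 1/2} |v − η|^{1/q − 1} dv ≤ C t^{−1/4}, uniformly in η ≥ 0. -/
open Real MeasureTheory

/-- `u ^ (1/4) ≤ exp u` for `u ≥ 0`. -/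
lemma aux_rpow_quarter_le_exp {u : ℝ} (hu : 0 ≤ u) : u ^ ((1:ℝ)/4) ≤ Real.exp u := by
  rcases le_or_gt u 1 with h | h
  · calc u ^ ((1:ℝ)/4) ≤ 1 := Real.rpow_le_one hu h (by norm_num)
    _ ≤ Real.exp u := Real.one_le_exp hu
  · calc u ^ ((1:ℝ)/4) ≤ u ^ (1:ℝ) :=
        Real.rpow_le_rpow_of_exponent_le h.le (by norm_num)
    _ = u := Real.rpow_one u
    _ ≤ Real.exp u := by linarith [Real.add_one_le_exp u]

/-- `exp (-(c x²)) x^{1/2} ≤ c^{-1/4}` for `c > 0`, `x ≥ 0`. -/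
lemma aux_exp_mul_rpow_le {c x : ℝ} (hc : 0 < c) (hx : 0 ≤ x) :
    Real.exp (-(c * x ^ 2)) * x ^ ((1:ℝ)/2) ≤ c ^ (-((1:ℝ)/4)) := by
  have hcx : 0 ≤ c * x ^ 2 := by positivity
  have key : x ^ ((1:ℝ)/2) ≤ Real.exp (c * x ^ 2) * c ^ (-((1:ℝ)/4)) := by
    have h1 : (c * x ^ 2) ^ ((1:ℝ)/4) ≤ Real.exp (c * x ^ 2) :=
      aux_rpow_quarter_le_exp hcx
    have h2 : (c * x ^ 2) ^ ((1:ℝ)/4) = c ^ ((1:ℝ)/4) * x ^ ((1:ℝ)/2) := by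
      rw [Real.mul_rpow hc.le (by positivity), ← Real.rpow_natCast x 2,
        ← Real.rpow_mul hx]
      norm_num
    have h3 : x ^ ((1:ℝ)/2) = (c * x ^ 2) ^ ((1:ℝ)/4) * c ^ (-((1:ℝ)/4)) := by
      rw [h2, mul_assoc, mul_comm (x ^ ((1:ℝ)/2)), ← mul_assoc,
        ← Real.rpow_add hc]
      norm_num
    rw [h3]
    exact mul_le_mul_of_nonneg_right h1 (by positivity)
  calc Real.exp (-(c * x ^ 2)) * x ^ ((1:ℝ)/2)
      ≤ Real.exp (-(c * x ^ 2)) * (Real.exp (c * x ^ 2) * c ^ (-((1:ℝ)/4))) :=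
        mul_le_mul_of_nonneg_left key (Real.exp_nonneg _)
    _ = c ^ (-((1:ℝ)/4)) := by
        rw [← mul_assoc, ← Real.exp_add]; simp

/-- Integrability of `|v - η| ^ b` on `(0, 2η)` for `-1 < b`. -/
lemma aux_integrableOn_abs_rpow {b η : ℝ} (hb : -1 < b) (hη : 0 ≤ η) :
    IntegrableOn (fun v : ℝ => |v - η| ^ b) (Set.Ioc 0 (2*η)) volume := by
  have J : ∀ c d : ℝ, IntervalIntegrable (fun x : ℝ => x ^ b) volume c d :=
    fun c d => intervalIntegral.intervalIntegrable_rpow' hb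
  have g1 : IntervalIntegrable (fun x : ℝ => (x - η) ^ b) volume η (2*η) := by
    have := (J 0 η).comp_sub_right η
    simpa [two_mul] using this
  have g2 : IntervalIntegrable (fun x : ℝ => (η - x) ^ b) volume 0 η := by
    have := (J 0 η).comp_sub_left η
    simpa using this.symm
  have i1 : IntegrableOn (fun v : ℝ => |v - η| ^ b) (Set.Ioc 0 η) volume := by
    refine (((intervalIntegrable_iff_integrableOn_Ioc_of_le hη).mp g2)).congr_fun
      (fun v hv => ?_) measurableSet_Ioc
    rw [abs_of_nonpos (by linarith [hv.2] : v - η ≤ 0)]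
    ring_nf
  have i2 : IntegrableOn (fun v : ℝ => |v - η| ^ b) (Set.Ioc η (2*η)) volume := by
    refine (((intervalIntegrable_iff_integrableOn_Ioc_of_le (by linarith)).mp g1)).congr_fun
      (fun v hv => ?_) measurableSet_Ioc
    rw [abs_of_nonneg (by linarith [hv.1] : 0 ≤ v - η)]
  rw [← Set.Ioc_union_Ioc_eq_Ioc hη (by linarith : η ≤ 2*η)]
  exact i1.union i2

/-- Value of `∫ |v - η| ^ b` on `(0, 2η)` for `-1 < b`. -/
lemma aux_integral_abs_rpow {b η : ℝ} (hb : -1 < b) (hη : 0 ≤ η) :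
    ∫ v in Set.Ioo (0:ℝ) (2*η), |v - η| ^ b = 2 * η ^ (b+1) / (b+1) := by
  have hb1 : (0:ℝ) < b + 1 := by linarith
  have base : ∫ x in (0:ℝ)..η, x ^ b = η ^ (b+1) / (b+1) := by
    rw [integral_rpow (Or.inl hb), Real.zero_rpow (by linarith : b + 1 ≠ 0)]
    ring
  have g1 : IntervalIntegrable (fun x : ℝ => x ^ b) volume 0 η :=
    intervalIntegral.intervalIntegrable_rpow' hb
  have i1 : IntegrableOn (fun v : ℝ => |v - η| ^ b) (Set.Ioc 0 η) volume :=
    (aux_integrableOn_abs_rpow hb hη).mono_set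
      (Set.Ioc_subset_Ioc le_rfl (by linarith))
  have i2 : IntegrableOn (fun v : ℝ => |v - η| ^ b) (Set.Ioc η (2*η)) volume :=
    (aux_integrableOn_abs_rpow hb hη).mono_set
      (Set.Ioc_subset_Ioc (by linarith) le_rfl)
  have p1 : ∫ v in Set.Ioc (0:ℝ) η, |v - η| ^ b = η ^ (b+1) / (b+1) := by
    rw [setIntegral_congr_fun measurableSet_Ioc
      (fun v hv => by
        show |v - η| ^ b = (η - v) ^ b
        rw [abs_of_nonpos (by linarith [hv.2] : v - η ≤ 0)]; ring_nf : Set.EqOn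
        (fun v : ℝ => |v - η| ^ b) (fun v : ℝ => (η - v) ^ b) (Set.Ioc 0 η)),
      ← intervalIntegral.integral_of_le hη,
      intervalIntegral.integral_comp_sub_left (fun x : ℝ => x ^ b) η]
    simpa using base
  have p2 : ∫ v in Set.Ioc η (2*η), |v - η| ^ b = η ^ (b+1) / (b+1) := by
    rw [setIntegral_congr_fun measurableSet_Ioc
      (fun v hv => by
        show |v - η| ^ b = (v - η) ^ b
        rw [abs_of_nonneg (by linarith [hv.1] : 0 ≤ v - η)] : Set.EqOn
        (fun v : ℝ => |v - η| ^ b) (fun v : ℝ => (v - η) ^ b) (Set.Ioc η (2*η))),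
      ← intervalIntegral.integral_of_le (by linarith : η ≤ 2*η),
      intervalIntegral.integral_comp_sub_right (fun x : ℝ => x ^ b) η]
    rw [show 2*η - η = η by ring, sub_self]
    exact base
  rw [← integral_Ioc_eq_integral_Ioo,
    ← Set.Ioc_union_Ioc_eq_Ioc hη (by linarith : η ≤ 2*η),
    setIntegral_union (Set.Ioc_disjoint_Ioc_of_le le_rfl) measurableSet_Ioc i1 i2, p1, p2]
  ring

theorem integral_estimate_Holder_pair
    (p q A : ℝ) (hq : 2 < q) (hpq : 1 / p + 1 / q = 1) (hA : 0 < A) :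
    ∃ C : ℝ, ∀ t η : ℝ, 1 ≤ t → 0 ≤ η →
      (∫ v in Set.Ioi (0 : ℝ),
          Real.exp (-t * A * v ^ 2) * v ^ (1 / p - 1 / 2) *
            |v - η| ^ (1 / q - 1)) ≤
        C * t ^ (-(1 / 4) : ℝ) := by
  have hq0 : (0:ℝ) < q := by linarith
  have h0q : 0 < 1 / q := by positivity
  have h1q : 1 / q < 1 / 2 := by
    rw [div_lt_div_iff₀ hq0 two_pos]; linarith
  set a : ℝ := 1 / p - 1 / 2 with ha_def
  set b : ℝ := 1 / q - 1 with hb_def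
  have ha0 : 0 < a := by rw [ha_def]; linarith
  have hb0 : -1 < b := by rw [hb_def]; linarith
  have hbneg : b < 0 := by rw [hb_def]; linarith
  have hab : a + b = -(1/2) := by rw [ha_def, hb_def]; linarith
  have hb1 : (0:ℝ) < b + 1 := by linarith
  refine ⟨2 ^ (-b) * ((1:ℝ)/2 * Real.Gamma (1/4) * A ^ (-((1:ℝ)/4)))
      + 2 ^ (a+1) / (b+1) * (((4:ℝ)/9) ^ (-((1:ℝ)/4)) * A ^ (-((1:ℝ)/4))), ?_⟩
  intro t η ht hη
  have ht0 : (0:ℝ) < t := by linarith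
  have htA : 0 < t * A := mul_pos ht0 hA
  set K : ℝ := Real.exp (-(4/9*(t*A)*η^2)) * (2*η) ^ a with hK_def
  have hK0 : 0 ≤ K := by positivity
  set h1 : ℝ → ℝ := fun v => 2 ^ (-b) * (v ^ (-((1:ℝ)/2)) * Real.exp (-(t*A) * v ^ 2))
    with hh1_def
  set h2 : ℝ → ℝ := (Set.Ioo (0:ℝ) (2*η)).indicator (fun v => K * |v - η| ^ b)
    with hh2_def
  have h2nonneg : ∀ v, 0 ≤ h2 v := by
    intro v
    exact Set.indicator_nonneg (fun x _ => by positivity) v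
  have h1nonneg : ∀ v, 0 < v → 0 ≤ h1 v := by
    intro v hv; rw [hh1_def]; positivity
  -- pointwise bound
  have key : ∀ v ∈ Set.Ioi (0:ℝ),
      Real.exp (-t * A * v ^ 2) * v ^ a * |v - η| ^ b ≤ h1 v + h2 v := by
    intro v hv
    simp only [Set.mem_Ioi] at hv
    rcases le_or_gt (v/2) |v - η| with h | h
    · have hvb : |v - η| ^ b ≤ (v/2) ^ b :=
        Real.rpow_le_rpow_of_nonpos (by positivity) h hbneg.le
      have step : Real.exp (-t * A * v ^ 2) * v ^ a * |v - η| ^ b ≤ h1 v := by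
        calc Real.exp (-t * A * v ^ 2) * v ^ a * |v - η| ^ b
            ≤ Real.exp (-t * A * v ^ 2) * v ^ a * (v/2) ^ b :=
              mul_le_mul_of_nonneg_left hvb (by positivity)
          _ = h1 v := by
              rw [hh1_def]
              have e1 : (v/2) ^ b = v ^ b * 2 ^ (-b) := by
                rw [Real.div_rpow hv.le (by norm_num), Real.rpow_neg (by norm_num),
                  div_eq_mul_inv]
              have e2 : v ^ a * v ^ b = v ^ (-((1:ℝ)/2)) := by
                rw [← Real.rpow_add hv, hab]
              have e3 : -t * A * v ^ 2 = -(t*A) * v ^ 2 := by ring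
              rw [e1, e3]
              rw [mul_assoc, ← mul_assoc (v ^ a), e2]
              ring
      linarith [h2nonneg v, step]
    · have hlt1 : v - η < v/2 := lt_of_le_of_lt (le_abs_self _) h
      have hlt2 : η - v < v/2 :=
        lt_of_le_of_lt (by rw [← neg_sub v η]; exact neg_le_abs _) h
      have hv2η : v < 2*η := by linarith
      have hvlow : 2*η/3 < v := by linarith
      have hvmem : v ∈ Set.Ioo (0:ℝ) (2*η) := ⟨hv, hv2η⟩
      have hexp : Real.exp (-t * A * v ^ 2) ≤ Real.exp (-(4/9*(t*A)*η^2)) := by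
        apply Real.exp_le_exp.mpr
        have hsq : 4/9*η^2 ≤ v^2 := by
          nlinarith [mul_pos (show (0:ℝ) < v - 2*η/3 by linarith)
            (show (0:ℝ) < v + 2*η/3 by linarith)]
        nlinarith [mul_le_mul_of_nonneg_left hsq htA.le]
      have hva : v ^ a ≤ (2*η) ^ a := Real.rpow_le_rpow hv.le hv2η.le ha0.le
      have step : Real.exp (-t * A * v ^ 2) * v ^ a * |v - η| ^ b ≤ h2 v := by
        rw [hh2_def, Set.indicator_of_mem hvmem, hK_def]
        have : Real.exp (-t * A * v ^ 2) * v ^ a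
            ≤ Real.exp (-(4/9*(t*A)*η^2)) * (2*η) ^ a :=
          mul_le_mul hexp hva (by positivity) (Real.exp_nonneg _)
        exact mul_le_mul_of_nonneg_right this (by positivity)
      linarith [h1nonneg v hv, step]
  -- integrability
  have ih1 : IntegrableOn h1 (Set.Ioi (0:ℝ)) volume := by
    rw [hh1_def]
    exact (integrableOn_rpow_mul_exp_neg_mul_sq htA (by norm_num : (-1:ℝ) < -(1/2))).const_mul _
  have ih2 : IntegrableOn h2 (Set.Ioi (0:ℝ)) volume := by
    rw [hh2_def]
    refine (Integrable.integrableOn ?_)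
    rw [integrable_indicator_iff measurableSet_Ioo]
    exact (((aux_integrableOn_abs_rpow hb0 hη).mono_set
      Set.Ioo_subset_Ioc_self).const_mul K)
  -- integral values
  have hGauss : ∫ x in Set.Ioi (0:ℝ), x ^ (-((1:ℝ)/2)) * Real.exp (-(t*A) * x ^ 2)
      = (t*A) ^ (-((1:ℝ)/4)) * (1/2) * Real.Gamma (1/4) := by
    have := integral_rpow_mul_exp_neg_mul_rpow (p := 2) (q := -((1:ℝ)/2)) (b := t*A)
      two_pos (by norm_num) htA
    rw [show (-(-((1:ℝ)/2) + 1) / 2) = -((1:ℝ)/4) by norm_num,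
      show ((-((1:ℝ)/2) + 1) / 2) = (1:ℝ)/4 by norm_num] at this
    rw [← this]
    refine setIntegral_congr_fun measurableSet_Ioi (fun x hx => ?_)
    rw [← Real.rpow_natCast x 2]
    norm_num
  have hI1 : ∫ v in Set.Ioi (0:ℝ), h1 v
      = 2 ^ (-b) * ((t*A) ^ (-((1:ℝ)/4)) * (1/2) * Real.Gamma (1/4)) := by
    rw [hh1_def, integral_const_mul, hGauss]
  have hI2 : ∫ v in Set.Ioi (0:ℝ), h2 v = K * (2 * η ^ (b+1) / (b+1)) := by
    rw [hh2_def, integral_indicator measurableSet_Ioo,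
      Measure.restrict_restrict measurableSet_Ioo,
      Set.inter_eq_left.mpr (fun x hx => hx.1),
      integral_const_mul, aux_integral_abs_rpow hb0 hη]
  -- the main estimate
  have main : (∫ v in Set.Ioi (0:ℝ),
      Real.exp (-t * A * v ^ 2) * v ^ a * |v - η| ^ b)
      ≤ (∫ v in Set.Ioi (0:ℝ), h1 v) + ∫ v in Set.Ioi (0:ℝ), h2 v := by
    rw [← integral_add ih1 ih2]
    refine integral_mono_of_nonneg ?_ (ih1.add ih2) ?_
    · rw [Filter.EventuallyLE, ae_restrict_iff' measurableSet_Ioi]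
      filter_upwards with v hv
      simp only [Set.mem_Ioi] at hv
      positivity
    · rw [Filter.EventuallyLE, ae_restrict_iff' measurableSet_Ioi]
      filter_upwards with v hv
      exact key v hv
  -- bound the two terms
  have hrw1 : 2 ^ (-b) * ((t*A) ^ (-((1:ℝ)/4)) * (1/2) * Real.Gamma (1/4))
      = 2 ^ (-b) * ((1:ℝ)/2 * Real.Gamma (1/4) * A ^ (-((1:ℝ)/4))) * t ^ (-((1:ℝ)/4)) := by
    rw [Real.mul_rpow ht0.le hA.le]; ring
  have hterm2 : K * (2 * η ^ (b+1) / (b+1))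
      ≤ 2 ^ (a+1) / (b+1) * (((4:ℝ)/9) ^ (-((1:ℝ)/4)) * A ^ (-((1:ℝ)/4))) * t ^ (-((1:ℝ)/4)) := by
    have hc : (0:ℝ) < 4/9*(t*A) := by positivity
    have e1 : (2*η) ^ a = 2 ^ a * η ^ a := Real.mul_rpow (by norm_num) hη
    have hab2 : a + (b+1) = (1:ℝ)/2 := by linarith
    have e2 : η ^ ((1:ℝ)/2) = η ^ a * η ^ (b+1) := by
      rw [← hab2]
      exact Real.rpow_add' hη (by rw [hab2]; norm_num)
    have e21 : (2:ℝ) ^ (a+1) = 2 ^ a * 2 := by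
      rw [Real.rpow_add two_pos, Real.rpow_one]
    have e3 : K * (2 * η ^ (b+1) / (b+1))
        = 2 ^ (a+1) / (b+1) * (Real.exp (-(4/9*(t*A)*η^2)) * η ^ ((1:ℝ)/2)) := by
      rw [hK_def, e1, e21, e2]
      ring
    have e4 : Real.exp (-(4/9*(t*A)*η^2)) * η ^ ((1:ℝ)/2)
        ≤ (4/9*(t*A)) ^ (-((1:ℝ)/4)) := by
      exact aux_exp_mul_rpow_le hc hη
    have e5 : (4/9*(t*A)) ^ (-((1:ℝ)/4))
        = ((4:ℝ)/9) ^ (-((1:ℝ)/4)) * A ^ (-((1:ℝ)/4)) * t ^ (-((1:ℝ)/4)) := by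
      rw [Real.mul_rpow (by norm_num) htA.le, Real.mul_rpow ht0.le hA.le]
      ring
    rw [e3]
    calc 2 ^ (a+1) / (b+1) * (Real.exp (-(4/9*(t*A)*η^2)) * η ^ ((1:ℝ)/2))
        ≤ 2 ^ (a+1) / (b+1) * ((4/9*(t*A)) ^ (-((1:ℝ)/4))) :=
          mul_le_mul_of_nonneg_left e4 (by positivity)
      _ = 2 ^ (a+1) / (b+1) * (((4:ℝ)/9) ^ (-((1:ℝ)/4)) * A ^ (-((1:ℝ)/4))) * t ^ (-((1:ℝ)/4)) := by
          rw [e5]; ring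
  have hfin : -(1 / 4 : ℝ) = -((1:ℝ)/4) := by norm_num
  rw [hfin]
  calc (∫ v in Set.Ioi (0:ℝ), Real.exp (-t * A * v ^ 2) * v ^ a * |v - η| ^ b)
      ≤ (∫ v in Set.Ioi (0:ℝ), h1 v) + ∫ v in Set.Ioi (0:ℝ), h2 v := main
    _ ≤ 2 ^ (-b) * ((1:ℝ)/2 * Real.Gamma (1/4) * A ^ (-((1:ℝ)/4))) * t ^ (-((1:ℝ)/4))
        + 2 ^ (a+1) / (b+1) * (((4:ℝ)/9) ^ (-((1:ℝ)/4)) * A ^ (-((1:ℝ)/4))) * t ^ (-((1:ℝ)/4)) := by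
        rw [hI1, hI2, hrw1]
        exact add_le_add le_rfl hterm2
    _ = (2 ^ (-b) * ((1:ℝ)/2 * Real.Gamma (1/4) * A ^ (-((1:ℝ)/4)))
        + 2 ^ (a+1) / (b+1) * (((4:ℝ)/9) ^ (-((1:ℝ)/4)) * A ^ (-((1:ℝ)/4)))) * t ^ (-((1:ℝ)/4)) := by
        ring
end
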